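/- There exists an absolute constant c such that if p ≥ c·μ⁶·log^{1.5}(d)/d, α = 10μ/√d, and λ ≥ μ²p/α², then with probability at least 1 − 1/d over the random choice of Ω the following holds: every x ∈ B' = {x ∈ ℝ^d : ‖x‖_∞ ≤ 4α} satisfying the second-order optimality condition (for all v ∈ ℝ^d, ‖P_Ω(vxᵀ + xvᵀ)‖_F² + λvᵀ∇²R(x)v ≥ 2vᵀP_Ω(zzᵀ − xxᵀ)v) satisfies ‖x‖₂² ≥ 1/8. -/

import Mathlib

set_option linter.unusedSectionVars false
set_option linter.unusedVariables false
set_option maxHeartbeats 1000000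


open Matrix Finset MeasureTheory

noncomputable section

/-- Euclidean norm of a finite real vector. -/
def vnorm {n : ℕ} (x : Fin n → ℝ) : ℝ := Real.sqrt (∑ i, (x i) ^ 2)

/-- Frobenius norm of a matrix. -/
def frobNorm {m n : ℕ} (A : Matrix (Fin m) (Fin n) ℝ) : ℝ :=
  Real.sqrt (∑ i, ∑ j, (A i j) ^ 2)

/-- Outer product of two vectors, as a matrix. -/
def outer {n : ℕ} (x y : Fin n → ℝ) : Matrix (Fin n) (Fin n) ℝ := fun i j => x i * y j

/-- `P_Ω`: the sample `ω` assigns a Boolean to each (ordered) pair; the entry `(i,j)`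
is observed iff the Boolean attached to the unordered pair `{i,j}` (encoded as
`(min i j, max i j)`) is `true`.  This makes the observed set symmetric, with each
unordered pair included independently. -/
def projO {d : ℕ} (ω : Fin d × Fin d → Bool) (A : Matrix (Fin d) (Fin d) ℝ) :
    Matrix (Fin d) (Fin d) ℝ :=
  fun i j => if ω (min i j, max i j) then A i j else 0

/-- Gradient of the regularizer `R(x) = ∑ᵢ (|xᵢ| − α)⁴ 1_{|xᵢ| ≥ α}`. -/
def gradR {d : ℕ} (α : ℝ) (x : Fin d → ℝ) : Fin d → ℝ :=
  fun i => if α ≤ |x i| then 4 * (|x i| - α) ^ 3 * Real.sign (x i) else 0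

/-- Hessian quadratic form `vᵀ ∇²R(x) v` of the regularizer. -/
def hessRQuad {d : ℕ} (α : ℝ) (x v : Fin d → ℝ) : ℝ :=
  ∑ i, (if α ≤ |x i| then 12 * (|x i| - α) ^ 2 else 0) * (v i) ^ 2

/-- The distribution of the random observation pattern: each unordered pair is included
independently with probability `p`.  -/
def omegaMeasure (d : ℕ) (p : ℝ) (hp1 : p ≤ 1) : Measure (Fin d × Fin d → Bool) :=
  Measure.pi fun _ => (PMF.bernoulli (Real.toNNReal p) (Real.toNNReal_le_one.mpr hp1)).toMeasure

namespace S9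

variable {ι : Type*} [Fintype ι] [DecidableEq ι]

def bern (p : ℝ) (b : Bool) : ℝ := if b then p else 1 - p
def bnum (b : Bool) : ℝ := if b then 1 else 0
lemma bern_nonneg {p : ℝ} (h0 : 0 ≤ p) (h1 : p ≤ 1) (b : Bool) : 0 ≤ bern p b := by
  cases b <;> simp [bern] <;> linarith
lemma bnum_nonneg (b : Bool) : 0 ≤ bnum b := by cases b <;> simp [bnum]

lemma measurableSet_all (S : Set (ι → Bool)) : MeasurableSet S := by
  have : S = ⋃ x ∈ S, {x} := by ext y; simp
  rw [this]
  exact MeasurableSet.biUnion (Set.to_countable S) fun x _ => measurableSet_singleton x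

lemma pi_bern_finset (p : ℝ) (h0 : 0 ≤ p) (h1 : p ≤ 1)
    (F : Finset (ι → Bool)) :
    (Measure.pi fun _ : ι =>
        (PMF.bernoulli (Real.toNNReal p) (Real.toNNReal_le_one.mpr h1)).toMeasure) ↑F
      = ENNReal.ofReal (∑ ω ∈ F, ∏ k, bern p (ω k)) := by
  classical
  have hsingle : ∀ ω : ι → Bool,
      (Measure.pi fun _ : ι =>
        (PMF.bernoulli (Real.toNNReal p) (Real.toNNReal_le_one.mpr h1)).toMeasure) {ω}
      = ENNReal.ofReal (∏ k, bern p (ω k)) := by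
    intro ω
    rw [← Set.univ_pi_singleton ω, Measure.pi_pi]
    rw [ENNReal.ofReal_prod_of_nonneg fun k _ => bern_nonneg h0 h1 (ω k)]
    refine Finset.prod_congr rfl fun k _ => ?_
    rw [PMF.toMeasure_apply_singleton _ _ (measurableSet_singleton _)]
    cases hk : ω k
    · simp only [PMF.bernoulli_apply, cond_false]
      show 1 - ENNReal.ofReal p = _
      rw [← ENNReal.ofReal_one, ← ENNReal.ofReal_sub _ h0]
      norm_num [bern]
    · norm_num [bern, PMF.bernoulli_apply, ENNReal.ofReal]
  have : (↑F : Set (ι → Bool)) = ⋃ ω ∈ F, {ω} := by ext y; simp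
  rw [this, measure_biUnion_finset]
  · rw [ENNReal.ofReal_sum_of_nonneg fun ω _ =>
      Finset.prod_nonneg fun k _ => bern_nonneg h0 h1 (ω k)]
    exact Finset.sum_congr rfl fun ω _ => hsingle ω
  · intro a _ b _ hab
    simp [Set.disjoint_singleton, hab]
  · exact fun ω _ => measurableSet_singleton ω

lemma exp_le_quad {u : ℝ} (h0 : 0 ≤ u) (h1 : u ≤ 1/2) :
    Real.exp u ≤ 1 + u + 2*u^2 := by
  have h2 : (0:ℝ) < 1 - u := by linarith
  have h3 : 1 - u ≤ Real.exp (-u) := by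
    have := Real.add_one_le_exp (-u); linarith
  have h4 : Real.exp u = (Real.exp (-u))⁻¹ := by
    rw [← Real.exp_neg, neg_neg]
  rw [h4]
  have h5 : (Real.exp (-u))⁻¹ ≤ (1-u)⁻¹ := by
    apply inv_anti₀ h2 h3
  refine h5.trans ?_
  rw [inv_le_iff_one_le_mul₀ h2]
  nlinarith
lemma exp_neg_le_quad {u : ℝ} (h0 : 0 ≤ u) :
    Real.exp (-u) ≤ 1 - u + u^2 := by
  have h2 : (0:ℝ) < 1 + u := by linarith
  have h3 : 1 + u ≤ Real.exp u := by have := Real.add_one_le_exp u; linarith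
  have h4 : Real.exp (-u) ≤ (1+u)⁻¹ := by
    rw [Real.exp_neg]
    exact inv_anti₀ h2 h3
  refine h4.trans ?_
  rw [inv_le_iff_one_le_mul₀ h2]
  nlinarith

lemma chernoff_core (p s a : ℝ) (h0 : 0 ≤ p) (h1 : p ≤ 1) (w : ι → ℝ)
    (F : Finset (ι → Bool))
    (hF : ∀ ω ∈ F, 0 ≤ s * ((∑ k, w k * bnum (ω k)) - a)) :
    ∑ ω ∈ F, ∏ k, bern p (ω k)
      ≤ Real.exp (-(s*a)) * ∏ k, (1 - p + p * Real.exp (s * w k)) := by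
  classical
  have step1 : ∑ ω ∈ F, ∏ k, bern p (ω k)
      ≤ ∑ ω ∈ F, Real.exp (s * ((∑ k, w k * bnum (ω k)) - a)) * ∏ k, bern p (ω k) := by
    refine Finset.sum_le_sum fun ω hω => ?_
    have h2 := Real.one_le_exp (hF ω hω)
    have h3 : (0:ℝ) ≤ ∏ k, bern p (ω k) :=
      Finset.prod_nonneg fun k _ => bern_nonneg h0 h1 (ω k)
    nlinarith
  have step2 : ∑ ω ∈ F, Real.exp (s * ((∑ k, w k * bnum (ω k)) - a)) * ∏ k, bern p (ω k)
      ≤ ∑ ω : ι → Bool, Real.exp (s * ((∑ k, w k * bnum (ω k)) - a)) * ∏ k, bern p (ω k) := by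
    refine Finset.sum_le_sum_of_subset_of_nonneg (Finset.subset_univ F) fun ω _ _ => ?_
    exact mul_nonneg (Real.exp_nonneg _)
      (Finset.prod_nonneg fun k _ => bern_nonneg h0 h1 (ω k))
  have key : ∀ ω : ι → Bool,
      Real.exp (s * ((∑ k, w k * bnum (ω k)) - a)) * ∏ k, bern p (ω k)
      = Real.exp (-(s*a)) * ∏ k, (bern p (ω k) * Real.exp (s * (w k * bnum (ω k)))) := by
    intro ω
    rw [mul_sub, sub_eq_add_neg, Real.exp_add, Finset.mul_sum, Real.exp_sum,
      Finset.prod_mul_distrib]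
    ring
  have step3 : ∑ ω : ι → Bool, ∏ k, (bern p (ω k) * Real.exp (s * (w k * bnum (ω k))))
      = ∏ k, (1 - p + p * Real.exp (s * w k)) := by
    have := Finset.prod_univ_sum (fun _ : ι => (Finset.univ : Finset Bool))
      (fun k b => bern p b * Real.exp (s * (w k * bnum b)))
    rw [Fintype.piFinset_univ] at this
    rw [← this]
    refine Finset.prod_congr rfl fun k _ => ?_
    rw [Fintype.sum_bool]
    simp [bern, bnum]
    ring
  calc ∑ ω ∈ F, ∏ k, bern p (ω k)
      ≤ ∑ ω : ι → Bool, Real.exp (s * ((∑ k, w k * bnum (ω k)) - a)) * ∏ k, bern p (ω k) :=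
        step1.trans step2
    _ = Real.exp (-(s*a)) * ∑ ω : ι → Bool, ∏ k, (bern p (ω k) * Real.exp (s * (w k * bnum (ω k)))) := by
        rw [Finset.mul_sum]; exact Finset.sum_congr rfl fun ω _ => key ω
    _ = Real.exp (-(s*a)) * ∏ k, (1 - p + p * Real.exp (s * w k)) := by rw [step3]


lemma prod_factor_le (p : ℝ) (h0 : 0 ≤ p) (h1 : p ≤ 1) (s : ℝ) (w : ι → ℝ) :
    ∏ k, (1 - p + p * Real.exp (s * w k))
      ≤ Real.exp (∑ k, p * (Real.exp (s * w k) - 1)) := by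
  rw [Real.exp_sum]
  refine Finset.prod_le_prod (fun k _ => ?_) (fun k _ => ?_)
  · have := Real.exp_nonneg (s * w k); nlinarith
  · have := Real.add_one_le_exp (p * (Real.exp (s * w k) - 1)); linarith

lemma sum_weight_eq (C : ℝ) (w : ι → ℝ) (hsum : ∑ k, w k = 1)
    (f : ι → ℝ) (hf : ∀ k, f k = C * w k) : ∑ k, f k = C := by
  calc ∑ k, f k = ∑ k, C * w k := Finset.sum_congr rfl fun k _ => hf k
    _ = C * ∑ k, w k := by rw [Finset.mul_sum]
    _ = C := by rw [hsum, mul_one]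

lemma chernoff_upper (p W : ℝ) (hp : 0 < p) (hp1 : p ≤ 1) (hW : 0 < W)
    (w : ι → ℝ) (hw0 : ∀ k, 0 ≤ w k) (hwW : ∀ k, w k ≤ W) (hsum : ∑ k, w k = 1)
    (F : Finset (ι → Bool)) (hF : ∀ ω ∈ F, 6/5*p ≤ ∑ k, w k * bnum (ω k)) :
    ∑ ω ∈ F, ∏ k, bern p (ω k) ≤ Real.exp (-(p/(200*W))) := by
  set s : ℝ := 1/(20*W) with hs
  have hWne : W ≠ 0 := ne_of_gt hW
  have hs0 : 0 < s := by positivity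
  have hsW : s * W = 1/20 := by rw [hs]; field_simp
  have hcore := chernoff_core p s (6/5*p) hp.le hp1 w F (fun ω hω => by
    have := hF ω hω; nlinarith)
  refine hcore.trans ?_
  have hterm : ∀ k, p * (Real.exp (s * w k) - 1) ≤ (p*s + 2*p*s^2*W) * w k := by
    intro k
    have hu0 : 0 ≤ s * w k := mul_nonneg hs0.le (hw0 k)
    have hu1 : s * w k ≤ 1/2 := by
      have : s * w k ≤ s * W := mul_le_mul_of_nonneg_left (hwW k) hs0.le
      rw [hsW] at this; linarith
    have hq := exp_le_quad hu0 hu1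
    have h3 : w k * w k ≤ w k * W := mul_le_mul_of_nonneg_left (hwW k) (hw0 k)
    have hw2 : (s * w k)^2 ≤ s^2 * (w k * W) := by
      calc (s * w k)^2 = s^2 * (w k * w k) := by ring
        _ ≤ s^2 * (w k * W) := mul_le_mul_of_nonneg_left h3 (sq_nonneg s)
    have h4 : Real.exp (s * w k) - 1 ≤ s * w k + 2 * (s^2 * (w k * W)) := by nlinarith
    have h5 := mul_le_mul_of_nonneg_left h4 hp.le
    nlinarith
  have hexp : ∑ k, p * (Real.exp (s * w k) - 1) ≤ p*s + 2*p*s^2*W := by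
    calc ∑ k, p * (Real.exp (s * w k) - 1) ≤ ∑ k, (p*s + 2*p*s^2*W) * w k :=
          Finset.sum_le_sum fun k _ => hterm k
      _ = (p*s + 2*p*s^2*W) * ∑ k, w k := by rw [Finset.mul_sum]
      _ = p*s + 2*p*s^2*W := by rw [hsum, mul_one]
  have h2 : ∏ k, (1 - p + p * Real.exp (s * w k)) ≤ Real.exp (p*s + 2*p*s^2*W) :=
    (prod_factor_le p hp.le hp1 s w).trans (Real.exp_le_exp.mpr hexp)
  calc Real.exp (-(s*(6/5*p))) * ∏ k, (1 - p + p * Real.exp (s * w k))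
      ≤ Real.exp (-(s*(6/5*p))) * Real.exp (p*s + 2*p*s^2*W) :=
        mul_le_mul_of_nonneg_left h2 (Real.exp_nonneg _)
    _ = Real.exp (-(s*(6/5*p)) + (p*s + 2*p*s^2*W)) := by rw [← Real.exp_add]
    _ = Real.exp (-(p/(200*W))) := by
        congr 1
        rw [hs]
        field_simp
        ring

lemma chernoff_lower (p W : ℝ) (hp : 0 < p) (hp1 : p ≤ 1) (hW : 0 < W)
    (w : ι → ℝ) (hw0 : ∀ k, 0 ≤ w k) (hwW : ∀ k, w k ≤ W) (hsum : ∑ k, w k = 1)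
    (F : Finset (ι → Bool)) (hF : ∀ ω ∈ F, (∑ k, w k * bnum (ω k)) ≤ 9/10*p) :
    ∑ ω ∈ F, ∏ k, bern p (ω k) ≤ Real.exp (-(p/(400*W))) := by
  set r : ℝ := 1/(20*W) with hr
  have hWne : W ≠ 0 := ne_of_gt hW
  have hr0 : 0 < r := by positivity
  have hcore := chernoff_core p (-r) (9/10*p) hp.le hp1 w F (fun ω hω => by
    have := hF ω hω; nlinarith)
  refine hcore.trans ?_
  have hterm : ∀ k, p * (Real.exp (-r * w k) - 1) ≤ (-(p*r) + p*r^2*W) * w k := by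
    intro k
    have hu0 : 0 ≤ r * w k := mul_nonneg hr0.le (hw0 k)
    have hq := exp_neg_le_quad hu0
    rw [show -(r * w k) = -r * w k by ring] at hq
    have h3 : w k * w k ≤ w k * W := mul_le_mul_of_nonneg_left (hwW k) (hw0 k)
    have hw2 : (r * w k)^2 ≤ r^2 * (w k * W) := by
      calc (r * w k)^2 = r^2 * (w k * w k) := by ring
        _ ≤ r^2 * (w k * W) := mul_le_mul_of_nonneg_left h3 (sq_nonneg r)
    have h4 : Real.exp (-r * w k) - 1 ≤ -(r * w k) + r^2 * (w k * W) := by nlinarith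
    have h5 := mul_le_mul_of_nonneg_left h4 hp.le
    nlinarith
  have hexp : ∑ k, p * (Real.exp (-r * w k) - 1) ≤ -(p*r) + p*r^2*W := by
    calc ∑ k, p * (Real.exp (-r * w k) - 1) ≤ ∑ k, (-(p*r) + p*r^2*W) * w k :=
          Finset.sum_le_sum fun k _ => hterm k
      _ = (-(p*r) + p*r^2*W) * ∑ k, w k := by rw [Finset.mul_sum]
      _ = -(p*r) + p*r^2*W := by rw [hsum, mul_one]
  have h2 : ∏ k, (1 - p + p * Real.exp (-r * w k)) ≤ Real.exp (-(p*r) + p*r^2*W) :=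
    (prod_factor_le p hp.le hp1 (-r) w).trans (Real.exp_le_exp.mpr hexp)
  calc Real.exp (-(-r*(9/10*p))) * ∏ k, (1 - p + p * Real.exp (-r * w k))
      ≤ Real.exp (-(-r*(9/10*p))) * Real.exp (-(p*r) + p*r^2*W) :=
        mul_le_mul_of_nonneg_left h2 (Real.exp_nonneg _)
    _ = Real.exp (-(-r*(9/10*p)) + (-(p*r) + p*r^2*W)) := by rw [← Real.exp_add]
    _ = Real.exp (-(p/(400*W))) := by
        congr 1
        rw [hr]
        field_simp
        ring

def xi {d : ℕ} (ω : Fin d × Fin d → Bool) (i j : Fin d) : ℝ :=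
  if ω (min i j, max i j) then 1 else 0

lemma xi_nonneg {d : ℕ} (ω : Fin d × Fin d → Bool) (i j : Fin d) : 0 ≤ xi ω i j := by
  unfold xi; split <;> norm_num

lemma xi_symm {d : ℕ} (ω : Fin d × Fin d → Bool) (i j : Fin d) : xi ω i j = xi ω j i := by
  unfold xi; rw [min_comm, max_comm]

lemma projO_apply {d : ℕ} (ω : Fin d × Fin d → Bool) (A : Matrix (Fin d) (Fin d) ℝ)
    (i j : Fin d) : projO ω A i j = xi ω i j * A i j := by
  unfold projO xi; split <;> simp

lemma frob_sq {d : ℕ} (ω : Fin d × Fin d → Bool) (A : Matrix (Fin d) (Fin d) ℝ) :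
    frobNorm (projO ω A) ^ 2 = ∑ i, ∑ j, xi ω i j * (A i j)^2 := by
  unfold frobNorm
  rw [Real.sq_sqrt]
  · refine Finset.sum_congr rfl fun i _ => Finset.sum_congr rfl fun j _ => ?_
    rw [projO_apply]
    unfold xi; split <;> ring
  · exact Finset.sum_nonneg fun i _ => Finset.sum_nonneg fun j _ => sq_nonneg _

lemma dot_eq {d : ℕ} (ω : Fin d × Fin d → Bool) (A : Matrix (Fin d) (Fin d) ℝ)
    (v : Fin d → ℝ) :
    v ⬝ᵥ (projO ω A).mulVec v = ∑ i, ∑ j, xi ω i j * A i j * v i * v j := by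
  unfold dotProduct Matrix.mulVec
  refine Finset.sum_congr rfl fun i _ => ?_
  unfold dotProduct
  rw [Finset.mul_sum]
  refine Finset.sum_congr rfl fun j _ => ?_
  simp only [projO_apply]
  ring

lemma dsum_add {d : ℕ} (f g : Fin d → Fin d → ℝ) :
    ∑ i, ∑ j, (f i j + g i j) = (∑ i, ∑ j, f i j) + (∑ i, ∑ j, g i j) := by
  rw [← Finset.sum_add_distrib]; exact Finset.sum_congr rfl fun i _ => Finset.sum_add_distrib

lemma dsum_sub {d : ℕ} (f g : Fin d → Fin d → ℝ) :
    ∑ i, ∑ j, (f i j - g i j) = (∑ i, ∑ j, f i j) - (∑ i, ∑ j, g i j) := by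
  rw [← Finset.sum_sub_distrib]; exact Finset.sum_congr rfl fun i _ => Finset.sum_sub_distrib _ _

lemma dsum_cmul {d : ℕ} (c : ℝ) (f : Fin d → Fin d → ℝ) :
    ∑ i, ∑ j, c * f i j = c * ∑ i, ∑ j, f i j := by
  rw [Finset.mul_sum]; exact Finset.sum_congr rfl fun i _ => (Finset.mul_sum _ _ _).symm

theorem deterministic {d : ℕ} (μ p α lam : ℝ) (z : Fin d → ℝ)
    (hμ : 0 < μ) (hp : 0 < p) (hd : 0 < d)
    (hz1 : ∑ i, z i ^ 2 = 1) (hzμ : ∀ i, z i ^ 2 ≤ μ^2 / d)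
    (hα2 : α ^ 2 = 100 * μ^2 / d) (hα0 : 0 < α)
    (ω : Fin d × Fin d → Bool)
    (hE1 : ∀ i : Fin d, ∑ j, xi ω i j * z j ^ 2 ≤ 6/5 * p)
    (hE2 : 9/10 * p ≤ ∑ i, ∑ j, xi ω i j * (z i ^2 * z j ^2))
    (x : Fin d → ℝ)
    (hsoc : ∀ v : Fin d → ℝ,
      frobNorm (projO ω (outer v x + outer x v)) ^ 2 + lam * hessRQuad α x v ≥
        2 * (v ⬝ᵥ (projO ω (outer z z - outer x x)).mulVec v)) :
    1/8 ≤ ∑ i, x i ^ 2 := by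
  classical
  set v : Fin d → ℝ := fun i => if |x i| < α then z i else 0 with hv
  set sx : ℝ := ∑ i, x i ^ 2 with hsx
  have hv_sq_le : ∀ i, v i ^ 2 ≤ z i ^ 2 := by
    intro i; rw [hv]; dsimp only; split
    · exact le_refl _
    · simpa using sq_nonneg (z i)
  have hzv : ∀ i, z i * v i = v i ^ 2 := by
    intro i; rw [hv]; dsimp only; split <;> ring
  have hdiff_nonneg : ∀ i, 0 ≤ z i ^ 2 - v i ^ 2 := fun i => by
    have := hv_sq_le i; linarith
  have hx_nonneg : (0:ℝ) ≤ sx := Finset.sum_nonneg fun i _ => sq_nonneg _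
  have hhess : hessRQuad α x v = 0 := by
    unfold hessRQuad
    refine Finset.sum_eq_zero fun i _ => ?_
    by_cases h : α ≤ |x i|
    · have : v i = 0 := by rw [hv]; dsimp only; rw [if_neg (not_lt.mpr h)]
      rw [this]; ring
    · rw [if_neg h]; ring
  have hsocv := hsoc v
  rw [frob_sq, dot_eq, hhess, mul_zero, add_zero] at hsocv
  have hAA : (∑ i, ∑ j, xi ω i j * (x i ^2 * v j ^2))
      = ∑ i, ∑ j, xi ω i j * (v i ^ 2 * x j ^ 2) := by
    rw [Finset.sum_comm]
    refine Finset.sum_congr rfl fun i _ => Finset.sum_congr rfl fun j _ => ?_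
    rw [xi_symm]; ring
  set A : ℝ := ∑ i, ∑ j, xi ω i j * (v i ^ 2 * x j ^ 2) with hA
  set B : ℝ := ∑ i, ∑ j, xi ω i j * (v i ^ 2 * v j ^ 2) with hB
  -- upper bound on Frobenius part
  have hub : ∑ i, ∑ j, xi ω i j * ((outer v x + outer x v) i j)^2 ≤ 4 * A := by
    have hpt : ∀ i j : Fin d, xi ω i j * ((outer v x + outer x v) i j)^2 ≤
        2 * (xi ω i j * (v i ^2 * x j ^2)) + 2 * (xi ω i j * (x i ^2 * v j ^2)) := by
      intro i j
      have h0 := xi_nonneg ω i j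
      have hsq : ((outer v x + outer x v) i j)^2 ≤ 2 * (v i ^2 * x j ^2) + 2 * (x i ^2 * v j ^2) := by
        show (v i * x j + x i * v j)^2 ≤ _
        nlinarith [sq_nonneg (v i * x j - x i * v j)]
      nlinarith
    calc ∑ i, ∑ j, xi ω i j * ((outer v x + outer x v) i j)^2
        ≤ ∑ i, ∑ j, (2 * (xi ω i j * (v i ^2 * x j ^2)) + 2 * (xi ω i j * (x i ^2 * v j ^2))) :=
          Finset.sum_le_sum fun i _ => Finset.sum_le_sum fun j _ => hpt i j
      _ = 4 * A := by
          rw [dsum_add, dsum_cmul, dsum_cmul, hAA, ← hA]; ring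
  -- lower bound on RHS of SOC
  have hlb : 2 * B - 2 * A ≤
      2 * ∑ i, ∑ j, xi ω i j * ((outer z z - outer x x) i j) * v i * v j := by
    have hpt : ∀ i j : Fin d,
        2 * (xi ω i j * (v i ^2 * v j ^2))
          - (xi ω i j * (v i ^2 * x j ^2) + xi ω i j * (x i ^2 * v j ^2))
        ≤ 2 * (xi ω i j * ((outer z z - outer x x) i j) * v i * v j) := by
      intro i j
      have h0 := xi_nonneg ω i j
      have hzz : (outer z z - outer x x) i j = z i * z j - x i * x j := rfl
      rw [hzz]
      have e1 : z i * z j * (v i * v j) = v i ^2 * v j ^2 := by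
        nlinarith [hzv i, hzv j]
      have e1' : xi ω i j * (z i * z j * (v i * v j)) = xi ω i j * (v i ^2 * v j ^2) := by
        rw [e1]
      nlinarith [e1', mul_nonneg h0 (sq_nonneg (x i * v j - x j * v i))]
    calc 2 * B - 2 * A
        = ∑ i, ∑ j, (2 * (xi ω i j * (v i ^2 * v j ^2))
            - (xi ω i j * (v i ^2 * x j ^2) + xi ω i j * (x i ^2 * v j ^2))) := by
          rw [dsum_sub, dsum_add, dsum_cmul, hAA, ← hA, ← hB]; ring
      _ ≤ ∑ i, ∑ j, 2 * (xi ω i j * ((outer z z - outer x x) i j) * v i * v j) :=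
          Finset.sum_le_sum fun i _ => Finset.sum_le_sum fun j _ => hpt i j
      _ = 2 * ∑ i, ∑ j, xi ω i j * ((outer z z - outer x x) i j) * v i * v j := by
          rw [dsum_cmul]
  -- hence B ≤ 3 A
  have hB3A : B ≤ 3 * A := by
    have h1 : 2 * ∑ i, ∑ j, xi ω i j * ((outer z z - outer x x) i j) * v i * v j
        ≤ 4 * A := le_trans hsocv hub
    linarith [hlb.trans h1]
  -- A ≤ (6/5) p sx
  have h3 : A ≤ 6/5 * p * sx := by
    rw [hA, Finset.sum_comm]
    have inner : ∀ j : Fin d, ∑ i, xi ω i j * (v i ^2 * x j ^2) ≤ (6/5*p) * x j ^2 := by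
      intro j
      have step : ∑ i, xi ω i j * v i ^2 ≤ 6/5 * p := by
        have s1 : ∑ i, xi ω i j * v i ^2 ≤ ∑ i, xi ω i j * z i ^2 :=
          Finset.sum_le_sum fun i _ => mul_le_mul_of_nonneg_left (hv_sq_le i) (xi_nonneg ω i j)
        have s2 : ∑ i, xi ω i j * z i ^2 = ∑ i, xi ω j i * z i ^2 :=
          Finset.sum_congr rfl fun i _ => by rw [xi_symm]
        have := hE1 j
        linarith [s1.trans_eq s2]
      calc ∑ i, xi ω i j * (v i ^2 * x j ^2) = (∑ i, xi ω i j * v i ^2) * x j ^2 := by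
            rw [Finset.sum_mul]; exact Finset.sum_congr rfl fun i _ => by ring
        _ ≤ (6/5*p) * x j ^2 := mul_le_mul_of_nonneg_right step (sq_nonneg _)
    calc ∑ j, ∑ i, xi ω i j * (v i ^2 * x j ^2) ≤ ∑ j, (6/5*p) * x j ^2 :=
          Finset.sum_le_sum fun j _ => inner j
      _ = 6/5 * p * sx := by rw [hsx, Finset.mul_sum]
  -- deficiency D
  set D : ℝ := ∑ i, (z i ^2 - v i ^2) with hD
  have h5 : D ≤ sx / 100 := by
    have hpt : ∀ i : Fin d, z i ^2 - v i ^2 ≤ x i ^2 / 100 := by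
      intro i
      by_cases h : |x i| < α
      · have : v i = z i := by rw [hv]; dsimp only; rw [if_pos h]
        rw [this]; simpa using div_nonneg (sq_nonneg (x i)) (by norm_num)
      · have hvi : v i = 0 := by rw [hv]; dsimp only; rw [if_neg h]
        push_neg at h
        have hax : α ^ 2 ≤ x i ^2 := by
          have := pow_le_pow_left₀ hα0.le h 2
          rwa [sq_abs] at this
        have hzi := hzμ i
        rw [hvi]
        have : μ ^2 / d = α ^2 / 100 := by rw [hα2]; ring
        nlinarith
    calc D ≤ ∑ i, x i ^2 / 100 := Finset.sum_le_sum fun i _ => hpt i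
      _ = sx / 100 := by rw [hsx, Finset.sum_div]
  have hD0 : 0 ≤ D := Finset.sum_nonneg fun i _ => hdiff_nonneg i
  -- T ≤ B + 2 * (6/5 p) * D
  have h4 : ∑ i, ∑ j, xi ω i j * (z i ^2 * z j ^2) ≤ B + 2 * (6/5*p) * D := by
    have hpt : ∀ i j : Fin d, xi ω i j * (z i ^2 * z j ^2) - xi ω i j * (v i ^2 * v j ^2)
        ≤ xi ω i j * ((z i ^2 - v i ^2) * z j ^2) + xi ω i j * (z i ^2 * (z j ^2 - v j ^2)) := by
      intro i j
      have h0 := xi_nonneg ω i j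
      nlinarith [mul_nonneg h0 (mul_nonneg (hdiff_nonneg i) (hdiff_nonneg j))]
    have hsplit : ∑ i, ∑ j, xi ω i j * (z i ^2 * z j ^2) - B
        ≤ (∑ i, ∑ j, xi ω i j * ((z i ^2 - v i ^2) * z j ^2))
          + ∑ i, ∑ j, xi ω i j * (z i ^2 * (z j ^2 - v j ^2)) := by
      rw [hB, ← dsum_sub, ← dsum_add]
      exact Finset.sum_le_sum fun i _ => Finset.sum_le_sum fun j _ => hpt i j
    have hfirst : ∑ i, ∑ j, xi ω i j * ((z i ^2 - v i ^2) * z j ^2) ≤ (6/5*p) * D := by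
      have inner : ∀ i : Fin d, ∑ j, xi ω i j * ((z i ^2 - v i ^2) * z j ^2)
          ≤ (z i ^2 - v i ^2) * (6/5*p) := by
        intro i
        calc ∑ j, xi ω i j * ((z i ^2 - v i ^2) * z j ^2)
            = (z i ^2 - v i ^2) * ∑ j, xi ω i j * z j ^2 := by
              rw [Finset.mul_sum]; exact Finset.sum_congr rfl fun j _ => by ring
          _ ≤ (z i ^2 - v i ^2) * (6/5*p) :=
              mul_le_mul_of_nonneg_left (hE1 i) (hdiff_nonneg i)
      calc ∑ i, ∑ j, xi ω i j * ((z i ^2 - v i ^2) * z j ^2)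
          ≤ ∑ i, (z i ^2 - v i ^2) * (6/5*p) := Finset.sum_le_sum fun i _ => inner i
        _ = (6/5*p) * D := by
            rw [hD, Finset.mul_sum]; exact Finset.sum_congr rfl fun i _ => by ring
        
    have hsecond : ∑ i, ∑ j, xi ω i j * (z i ^2 * (z j ^2 - v j ^2)) ≤ (6/5*p) * D := by
      rw [Finset.sum_comm]
      have inner : ∀ j : Fin d, ∑ i, xi ω i j * (z i ^2 * (z j ^2 - v j ^2))
          ≤ (z j ^2 - v j ^2) * (6/5*p) := by
        intro j
        have s2 : ∑ i, xi ω i j * z i ^2 ≤ 6/5*p := by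
          have : ∑ i, xi ω i j * z i ^2 = ∑ i, xi ω j i * z i ^2 :=
            Finset.sum_congr rfl fun i _ => by rw [xi_symm]
          rw [this]; exact hE1 j
        calc ∑ i, xi ω i j * (z i ^2 * (z j ^2 - v j ^2))
            = (z j ^2 - v j ^2) * ∑ i, xi ω i j * z i ^2 := by
              rw [Finset.mul_sum]; exact Finset.sum_congr rfl fun i _ => by ring
          _ ≤ (z j ^2 - v j ^2) * (6/5*p) :=
              mul_le_mul_of_nonneg_left s2 (hdiff_nonneg j)
      calc ∑ j, ∑ i, xi ω i j * (z i ^2 * (z j ^2 - v j ^2))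
          ≤ ∑ j, (z j ^2 - v j ^2) * (6/5*p) := Finset.sum_le_sum fun j _ => inner j
        _ = (6/5*p) * D := by
            rw [hD, Finset.mul_sum]; exact Finset.sum_congr rfl fun i _ => by ring
    linarith
  -- conclude
  by_contra hcon
  push_neg at hcon
  have hT := le_trans hE2 h4
  have hchain : 9/10 * p ≤ 3 * (6/5 * p * sx) + 2 * (6/5*p) * (sx/100) := by
    have := mul_le_mul_of_nonneg_left h5 (by positivity : (0:ℝ) ≤ 2 * (6/5*p))
    linarith [hB3A, h3]
  nlinarith [mul_pos hp (sub_pos.mpr hcon)]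


lemma minmax_inj {α : Type*} [LinearOrder α] {j a b : α}
    (h1 : min j a = min j b) (h2 : max j a = max j b) : a = b := by
  rcases le_total a j with ha | ha <;> rcases le_total b j with hb | hb
  · rw [min_eq_right ha, min_eq_right hb] at h1; exact h1
  · rw [min_eq_right ha, min_eq_left hb] at h1
    rw [max_eq_left ha, max_eq_right hb] at h2
    exact h1.trans h2
  · rw [min_eq_left ha, min_eq_right hb] at h1
    rw [max_eq_right ha, max_eq_left hb] at h2
    exact h2.trans h1
  · rw [max_eq_right ha, max_eq_right hb] at h2; exact h2

lemma pair_mem {d : ℕ} (k q : Fin d × Fin d) (h : (min q.1 q.2, max q.1 q.2) = k) :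
    q = (k.1, k.2) ∨ q = (k.2, k.1) := by
  subst h
  rcases le_total q.1 q.2 with h' | h'
  · left; simp [min_eq_left h', max_eq_right h']
  · right; simp [min_eq_right h', max_eq_left h']

lemma weight_bridge1 {d : ℕ} (z : Fin d → ℝ) (i0 : Fin d) (ω : Fin d × Fin d → Bool) :
    ∑ k : Fin d × Fin d,
      (∑ j ∈ Finset.univ.filter (fun j => ((min i0 j, max i0 j) : Fin d × Fin d) = k), z j ^ 2)
        * bnum (ω k)
      = ∑ j, xi ω i0 j * z j ^ 2 := by
  classical
  have hterm : ∀ k : Fin d × Fin d,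
      (∑ j ∈ Finset.univ.filter (fun j => ((min i0 j, max i0 j) : Fin d × Fin d) = k), z j ^ 2)
        * bnum (ω k)
      = ∑ j ∈ Finset.univ.filter (fun j => ((min i0 j, max i0 j) : Fin d × Fin d) = k),
          z j ^ 2 * bnum (ω (min i0 j, max i0 j)) := by
    intro k
    rw [Finset.sum_mul]
    refine Finset.sum_congr rfl fun j hj => ?_
    rw [(Finset.mem_filter.mp hj).2]
  rw [Finset.sum_congr rfl fun k _ => hterm k,
    Finset.sum_fiberwise Finset.univ (fun j => ((min i0 j, max i0 j) : Fin d × Fin d))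
      (fun j => z j ^ 2 * bnum (ω (min i0 j, max i0 j)))]
  refine Finset.sum_congr rfl fun j _ => ?_
  cases h : ω (min i0 j, max i0 j) <;> simp [xi, bnum, h]

lemma weight_sum1 {d : ℕ} (z : Fin d → ℝ) (i0 : Fin d) :
    ∑ k : Fin d × Fin d,
      (∑ j ∈ Finset.univ.filter (fun j => ((min i0 j, max i0 j) : Fin d × Fin d) = k), z j ^ 2)
      = ∑ j, z j ^ 2 :=
  Finset.sum_fiberwise Finset.univ _ _

lemma weight_le1 {d : ℕ} (z : Fin d → ℝ) (W : ℝ) (hz : ∀ j, z j ^ 2 ≤ W) (hW0 : 0 ≤ W)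
    (i0 : Fin d) (k : Fin d × Fin d) :
    (∑ j ∈ Finset.univ.filter (fun j => ((min i0 j, max i0 j) : Fin d × Fin d) = k), z j ^ 2)
      ≤ W := by
  classical
  set F := Finset.univ.filter (fun j => ((min i0 j, max i0 j) : Fin d × Fin d) = k) with hF
  have hcard : F.card ≤ 1 := by
    refine Finset.card_le_one.mpr fun a ha b hb => ?_
    rw [hF, Finset.mem_filter] at ha hb
    have h := ha.2.trans hb.2.symm
    rw [Prod.mk.injEq] at h
    exact minmax_inj h.1 h.2
  have hsum : ∑ j ∈ F, z j ^ 2 ≤ F.card • W :=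
    Finset.sum_le_card_nsmul F _ W fun j _ => hz j
  have : (F.card : ℝ) * W ≤ 1 * W := by
    apply mul_le_mul_of_nonneg_right _ hW0
    exact_mod_cast hcard
  rw [nsmul_eq_mul] at hsum
  linarith

lemma weight_bridge2 {d : ℕ} (z : Fin d → ℝ) (ω : Fin d × Fin d → Bool) :
    ∑ k : Fin d × Fin d,
      (∑ q ∈ Finset.univ.filter
          (fun q : Fin d × Fin d => ((min q.1 q.2, max q.1 q.2) : Fin d × Fin d) = k),
          z q.1 ^ 2 * z q.2 ^ 2) * bnum (ω k)
      = ∑ i, ∑ j, xi ω i j * (z i ^ 2 * z j ^ 2) := by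
  classical
  have hterm : ∀ k : Fin d × Fin d,
      (∑ q ∈ Finset.univ.filter
          (fun q : Fin d × Fin d => ((min q.1 q.2, max q.1 q.2) : Fin d × Fin d) = k),
          z q.1 ^ 2 * z q.2 ^ 2) * bnum (ω k)
      = ∑ q ∈ Finset.univ.filter
          (fun q : Fin d × Fin d => ((min q.1 q.2, max q.1 q.2) : Fin d × Fin d) = k),
          z q.1 ^ 2 * z q.2 ^ 2 * bnum (ω (min q.1 q.2, max q.1 q.2)) := by
    intro k
    rw [Finset.sum_mul]
    refine Finset.sum_congr rfl fun q hq => ?_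
    rw [(Finset.mem_filter.mp hq).2]
  rw [Finset.sum_congr rfl fun k _ => hterm k,
    Finset.sum_fiberwise Finset.univ
      (fun q : Fin d × Fin d => ((min q.1 q.2, max q.1 q.2) : Fin d × Fin d))
      (fun q : Fin d × Fin d => z q.1 ^ 2 * z q.2 ^ 2 * bnum (ω (min q.1 q.2, max q.1 q.2)))]
  rw [Fintype.sum_prod_type]
  refine Finset.sum_congr rfl fun i _ => Finset.sum_congr rfl fun j _ => ?_
  cases h : ω (min i j, max i j) <;> simp [xi, bnum, h] <;> ring

lemma weight_sum2 {d : ℕ} (z : Fin d → ℝ) (hz1 : ∑ i, z i ^ 2 = 1) :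
    ∑ k : Fin d × Fin d,
      (∑ q ∈ Finset.univ.filter
          (fun q : Fin d × Fin d => ((min q.1 q.2, max q.1 q.2) : Fin d × Fin d) = k),
          z q.1 ^ 2 * z q.2 ^ 2) = 1 := by
  classical
  rw [Finset.sum_fiberwise Finset.univ
      (fun q : Fin d × Fin d => ((min q.1 q.2, max q.1 q.2) : Fin d × Fin d))
      (fun q : Fin d × Fin d => z q.1 ^ 2 * z q.2 ^ 2)]
  rw [Fintype.sum_prod_type]
  calc ∑ i, ∑ j, z i ^ 2 * z j ^ 2 = ∑ i, z i ^ 2 * ∑ j, z j ^ 2 :=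
        Finset.sum_congr rfl fun i _ => (Finset.mul_sum _ _ _).symm
    _ = 1 := by rw [hz1]; simpa using hz1

lemma weight_le2 {d : ℕ} (z : Fin d → ℝ) (W : ℝ) (hz : ∀ j, z j ^ 2 ≤ W) (hW0 : 0 ≤ W)
    (k : Fin d × Fin d) :
    (∑ q ∈ Finset.univ.filter
        (fun q : Fin d × Fin d => ((min q.1 q.2, max q.1 q.2) : Fin d × Fin d) = k),
        z q.1 ^ 2 * z q.2 ^ 2) ≤ 2 * W ^ 2 := by
  classical
  set F := Finset.univ.filter
      (fun q : Fin d × Fin d => ((min q.1 q.2, max q.1 q.2) : Fin d × Fin d) = k) with hF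
  have hsub : F ⊆ {(k.1, k.2), (k.2, k.1)} := by
    intro q hq
    rw [hF, Finset.mem_filter] at hq
    rcases pair_mem k q hq.2 with h | h <;> simp [h]
  have hcard : F.card ≤ 2 := by
    refine (Finset.card_le_card hsub).trans ?_
    exact (Finset.card_insert_le _ _).trans (by simp)
  have hterm : ∀ q ∈ F, z q.1 ^ 2 * z q.2 ^ 2 ≤ W ^ 2 := by
    intro q _
    have h1 := hz q.1; have h2 := hz q.2
    nlinarith [sq_nonneg (z q.1), sq_nonneg (z q.2)]
  have hsum : ∑ q ∈ F, z q.1 ^ 2 * z q.2 ^ 2 ≤ F.card • W ^ 2 :=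
    Finset.sum_le_card_nsmul F _ _ hterm
  rw [nsmul_eq_mul] at hsum
  have : (F.card : ℝ) * W ^ 2 ≤ 2 * W ^ 2 := by
    apply mul_le_mul_of_nonneg_right _ (sq_nonneg W)
    exact_mod_cast hcard
  linarith

lemma tail_bound1 {d : ℕ} (μ p : ℝ) (hd2 : (2:ℝ) ≤ d) (hμ1 : 1 ≤ μ)
    (hpd : 80000 * μ ^ 6 * Real.log d ≤ p * d) :
    Real.exp (-(p / (200 * (μ ^ 2 / d)))) ≤ 1 / (2 * (d:ℝ) ^ 2) := by
  have hd0 : (0:ℝ) < d := by linarith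
  have hμ0 : (0:ℝ) < μ := by linarith
  have hl2 : Real.log 2 ≤ Real.log d := Real.log_le_log (by norm_num) hd2
  have hl2p : (0.6931:ℝ) ≤ Real.log 2 := by linarith [Real.log_two_gt_d9]
  have hlpos : (0:ℝ) < Real.log d := by linarith
  have e : 200 * (μ ^ 2 / d) = 200 * μ ^ 2 / d := by ring
  rw [e, div_div_eq_mul_div]
  have key : Real.log (2 * (d:ℝ) ^ 2) ≤ p * d / (200 * μ ^ 2) := by
    rw [le_div_iff₀ (by positivity)]
    rw [Real.log_mul (by norm_num) (by positivity), Real.log_pow]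
    have h1 : Real.log d * μ ^ 2 ≤ Real.log d * μ ^ 6 := by
      apply mul_le_mul_of_nonneg_left _ hlpos.le
      exact pow_le_pow_right₀ hμ1 (by norm_num)
    have h2 : Real.log 2 * μ ^ 2 ≤ Real.log d * μ ^ 2 :=
      mul_le_mul_of_nonneg_right hl2 (sq_nonneg μ)
    push_cast
    nlinarith [mul_nonneg hlpos.le (by positivity : (0:ℝ) ≤ μ ^ 6)]
  have h2d : 2 * (d:ℝ) ^ 2 ≤ Real.exp (p * d / (200 * μ ^ 2)) :=
    (Real.log_le_iff_le_exp (by positivity)).mp key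
  rw [Real.exp_neg, one_div]
  exact inv_anti₀ (by positivity) h2d

lemma tail_bound2 {d : ℕ} (μ p : ℝ) (hd2 : (2:ℝ) ≤ d) (hμ1 : 1 ≤ μ) (hp0 : 0 < p)
    (hpd : 80000 * μ ^ 6 * Real.log d ≤ p * d) :
    Real.exp (-(p / (400 * (2 * (μ ^ 2 / d) ^ 2)))) ≤ 1 / (2 * (d:ℝ)) := by
  have hd0 : (0:ℝ) < d := by linarith
  have hμ0 : (0:ℝ) < μ := by linarith
  have hl2 : Real.log 2 ≤ Real.log d := Real.log_le_log (by norm_num) hd2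
  have hl2p : (0.6931:ℝ) ≤ Real.log 2 := by linarith [Real.log_two_gt_d9]
  have hlpos : (0:ℝ) < Real.log d := by linarith
  have e : 400 * (2 * (μ ^ 2 / d) ^ 2) = 800 * μ ^ 4 / d ^ 2 := by
    field_simp; ring
  rw [e, div_div_eq_mul_div]
  have key : Real.log (2 * (d:ℝ)) ≤ p * d ^ 2 / (800 * μ ^ 4) := by
    rw [le_div_iff₀ (by positivity)]
    rw [Real.log_mul (by norm_num) (by positivity)]
    have hstep : (80000 * μ ^ 6 * Real.log d) * 2 ≤ (p * d) * d := by
      have h0 : 0 ≤ 80000 * μ ^ 6 * Real.log d := by positivity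
      have h1 : (80000 * μ ^ 6 * Real.log d) * 2 ≤ (80000 * μ ^ 6 * Real.log d) * d :=
        mul_le_mul_of_nonneg_left hd2 h0
      have h2 : (80000 * μ ^ 6 * Real.log d) * d ≤ (p * d) * d :=
        mul_le_mul_of_nonneg_right hpd hd0.le
      linarith
    have h1 : Real.log d * μ ^ 4 ≤ Real.log d * μ ^ 6 := by
      apply mul_le_mul_of_nonneg_left _ hlpos.le
      exact pow_le_pow_right₀ hμ1 (by norm_num)
    have h2 : Real.log 2 * μ ^ 4 ≤ Real.log d * μ ^ 4 := by
      apply mul_le_mul_of_nonneg_right hl2 (by positivity)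
    push_cast
    nlinarith [mul_nonneg hlpos.le (by positivity : (0:ℝ) ≤ μ ^ 6)]
  have h2d : 2 * (d:ℝ) ≤ Real.exp (p * d ^ 2 / (800 * μ ^ 4)) :=
    (Real.log_le_iff_le_exp (by positivity)).mp key
  rw [Real.exp_neg, one_div]
  exact inv_anti₀ (by positivity) h2d

end S9

/-- there is an absolute constant `c` such that if
`p ≥ c μ⁶ log^{1.5} d / d`, `α = 10μ/√d` and `λ ≥ μ²p/α²`, then with probability at
least `1 − 1/d` over `Ω`, every `x` with `‖x‖_∞ ≤ 4α` satisfying the second-order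
optimality condition has `‖x‖₂² ≥ 1/8`. -/
theorem stmt9 :
    ∃ c : ℝ, 0 < c ∧
      ∀ (d : ℕ), 0 < d →
      ∀ (μ p lam α : ℝ) (z : Fin d → ℝ),
        0 < μ → 0 < p → ∀ (hp1 : p ≤ 1),
        vnorm z = 1 → (∀ i, |z i| ≤ μ / Real.sqrt d) →
        c * μ ^ 6 * Real.log d ^ ((3 : ℝ) / 2) / d ≤ p →
        α = 10 * μ / Real.sqrt d →
        μ ^ 2 * p / α ^ 2 ≤ lam →
        1 - 1 / (d : ENNReal) ≤
          omegaMeasure d p hp1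
            {ω | ∀ x : Fin d → ℝ,
              (∀ i, |x i| ≤ 4 * α) →
              (∀ v : Fin d → ℝ,
                frobNorm (projO ω (outer v x + outer x v)) ^ 2 + lam * hessRQuad α x v ≥
                  2 * (v ⬝ᵥ (projO ω (outer z z - outer x x)).mulVec v)) →
              vnorm x ^ 2 ≥ 1 / 8} := by
  classical
  refine ⟨100000, by norm_num, ?_⟩
  intro d hd μ p lam α z hμ hp hp1 hvz hzinf hple hα hlam
  by_cases hd1 : d = 1
  · subst hd1
    simp
  have hd2n : 2 ≤ d := by omega
  have hdR : (0:ℝ) < d := by exact_mod_cast hd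
  have hd2R : (2:ℝ) ≤ d := by exact_mod_cast hd2n
  have hsd : (0:ℝ) < Real.sqrt d := Real.sqrt_pos.mpr hdR
  have hz1 : ∑ i, z i ^ 2 = 1 := by
    have h := hvz
    unfold vnorm at h
    exact Real.sqrt_eq_one.mp h
  have hWz : ∀ i, z i ^ 2 ≤ μ ^ 2 / d := by
    intro i
    have h1 := hzinf i
    have h2 : z i ^ 2 = |z i| ^ 2 := (sq_abs _).symm
    rw [h2]
    calc |z i| ^ 2 ≤ (μ / Real.sqrt d) ^ 2 := pow_le_pow_left₀ (abs_nonneg _) h1 2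
      _ = μ ^ 2 / d := by rw [div_pow, Real.sq_sqrt hdR.le]
  have hα0 : 0 < α := by rw [hα]; positivity
  have hα2 : α ^ 2 = 100 * μ ^ 2 / d := by
    rw [hα, div_pow, mul_pow, Real.sq_sqrt hdR.le]; ring
  have hμ2 : (1:ℝ) ≤ μ ^ 2 := by
    rw [← hz1]
    calc ∑ i, z i ^ 2 ≤ ∑ _i : Fin d, μ ^ 2 / d := Finset.sum_le_sum fun i _ => hWz i
      _ = d * (μ ^ 2 / d) := by
          rw [Finset.sum_const, Finset.card_univ, Fintype.card_fin, nsmul_eq_mul]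
      _ = μ ^ 2 := by field_simp
  have hμ1 : (1:ℝ) ≤ μ := by nlinarith
  have hpdL : 100000 * μ ^ 6 * Real.log d ^ ((3:ℝ)/2) ≤ p * d := by
    have := (div_le_iff₀ hdR).mp hple
    linarith
  have hl2 : Real.log 2 ≤ Real.log d := Real.log_le_log (by norm_num) hd2R
  have hlpos : (0:ℝ) < Real.log d := by linarith [Real.log_two_gt_d9]
  have hL : (4/5 : ℝ) * Real.log d ≤ Real.log d ^ ((3:ℝ)/2) := by
    have hsq : (4:ℝ)/5 ≤ Real.sqrt (Real.log d) := by
      rw [Real.le_sqrt (by norm_num) hlpos.le]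
      nlinarith [Real.log_two_gt_d9]
    have hrw : Real.log d ^ ((3:ℝ)/2) = Real.sqrt (Real.log d) * Real.log d := by
      rw [show ((3:ℝ)/2) = 1/2 + 1 by norm_num, Real.rpow_add hlpos, Real.rpow_one,
        ← Real.sqrt_eq_rpow]
    rw [hrw]
    nlinarith
  have hpd80 : 80000 * μ ^ 6 * Real.log d ≤ p * d := by
    have h6 : (0:ℝ) ≤ 100000 * μ ^ 6 := by positivity
    have h7 := mul_le_mul_of_nonneg_left hL h6
    nlinarith
  -- the bad events
  set Bad1 : Fin d → Set (Fin d × Fin d → Bool) :=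
    (fun i0 => {ω | 6/5*p ≤ ∑ j, S9.xi ω i0 j * z j ^ 2}) with hBad1def
  set Bad2 : Set (Fin d × Fin d → Bool) :=
    {ω | (∑ i, ∑ j, S9.xi ω i j * (z i ^ 2 * z j ^ 2)) ≤ 9/10*p} with hBad2def
  set G : Set (Fin d × Fin d → Bool) :=
    {ω | ∀ x : Fin d → ℝ,
        (∀ i, |x i| ≤ 4 * α) →
        (∀ v : Fin d → ℝ,
          frobNorm (projO ω (outer v x + outer x v)) ^ 2 + lam * hessRQuad α x v ≥
            2 * (v ⬝ᵥ (projO ω (outer z z - outer x x)).mulVec v)) →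
        vnorm x ^ 2 ≥ 1 / 8} with hGdef
  have hGsub : Gᶜ ⊆ (⋃ i0, Bad1 i0) ∪ Bad2 := by
    intro ω hω
    by_contra hnot
    rw [Set.mem_union] at hnot
    push_neg at hnot
    obtain ⟨hn1, hn2⟩ := hnot
    rw [Set.mem_iUnion] at hn1
    push_neg at hn1
    have hE1 : ∀ i0 : Fin d, ∑ j, S9.xi ω i0 j * z j ^ 2 ≤ 6/5 * p := by
      intro i0
      have := hn1 i0
      rw [hBad1def] at this
      simp only [Set.mem_setOf_eq] at this
      linarith [not_le.mp this]
    have hE2 : 9/10 * p ≤ ∑ i, ∑ j, S9.xi ω i j * (z i ^ 2 * z j ^ 2) := by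
      rw [hBad2def] at hn2
      simp only [Set.mem_setOf_eq] at hn2
      linarith [not_le.mp hn2]
    refine hω ?_
    rw [hGdef]
    intro x hxinf hsoc
    have hdet := S9.deterministic μ p α lam z hμ hp hd hz1 hWz hα2 hα0 ω hE1 hE2 x hsoc
    show vnorm x ^ 2 ≥ 1/8
    unfold vnorm
    rw [Real.sq_sqrt (Finset.sum_nonneg fun i _ => sq_nonneg _)]
    exact hdet
  -- probability of each bad event
  have hBad1 : ∀ i0 : Fin d, omegaMeasure d p hp1 (Bad1 i0)
      ≤ ENNReal.ofReal (1/(2*(d:ℝ)^2)) := by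
    intro i0
    have hfin : (Bad1 i0).Finite := Set.toFinite _
    have hcoe : Bad1 i0 = ↑hfin.toFinset := (Set.Finite.coe_toFinset hfin).symm
    rw [hcoe]
    unfold omegaMeasure
    rw [S9.pi_bern_finset p hp.le hp1]
    apply ENNReal.ofReal_le_ofReal
    have hch := S9.chernoff_upper p (μ^2/d) hp hp1 (by positivity)
      (fun k => ∑ j ∈ Finset.univ.filter
          (fun j => ((min i0 j, max i0 j) : Fin d × Fin d) = k), z j ^ 2)
      (fun k => Finset.sum_nonneg fun j _ => sq_nonneg _)
      (fun k => S9.weight_le1 z (μ^2/d) hWz (by positivity) i0 k)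
      (by rw [S9.weight_sum1 z i0]; exact hz1)
      hfin.toFinset
      (fun ω hω => by
        rw [S9.weight_bridge1 z i0 ω]
        have := Set.Finite.mem_toFinset hfin |>.mp hω
        rw [hBad1def] at this
        exact this)
    exact hch.trans (S9.tail_bound1 μ p hd2R hμ1 hpd80)
  have hBad2 : omegaMeasure d p hp1 Bad2 ≤ ENNReal.ofReal (1/(2*(d:ℝ))) := by
    have hfin : Bad2.Finite := Set.toFinite _
    have hcoe : Bad2 = ↑hfin.toFinset := (Set.Finite.coe_toFinset hfin).symm
    rw [hcoe]
    unfold omegaMeasure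
    rw [S9.pi_bern_finset p hp.le hp1]
    apply ENNReal.ofReal_le_ofReal
    have hch := S9.chernoff_lower p (2*(μ^2/d)^2) hp hp1 (by positivity)
      (fun k => ∑ q ∈ Finset.univ.filter
          (fun q : Fin d × Fin d => ((min q.1 q.2, max q.1 q.2) : Fin d × Fin d) = k),
          z q.1 ^ 2 * z q.2 ^ 2)
      (fun k => Finset.sum_nonneg fun q _ => mul_nonneg (sq_nonneg _) (sq_nonneg _))
      (fun k => S9.weight_le2 z (μ^2/d) hWz (by positivity) k)
      (S9.weight_sum2 z hz1)
      hfin.toFinset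
      (fun ω hω => by
        rw [S9.weight_bridge2 z ω]
        have := Set.Finite.mem_toFinset hfin |>.mp hω
        rw [hBad2def] at this
        exact this)
    exact hch.trans (S9.tail_bound2 μ p hd2R hμ1 hp hpd80)
  -- union bound
  have heq : (d:ℝ) * (1/(2*(d:ℝ)^2)) + 1/(2*(d:ℝ)) = 1/(d:ℝ) := by
    field_simp
    ring
  have hunion : omegaMeasure d p hp1 Gᶜ ≤ ENNReal.ofReal (1/(d:ℝ)) := by
    calc omegaMeasure d p hp1 Gᶜ
        ≤ omegaMeasure d p hp1 ((⋃ i0, Bad1 i0) ∪ Bad2) := measure_mono hGsub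
      _ ≤ omegaMeasure d p hp1 (⋃ i0, Bad1 i0) + omegaMeasure d p hp1 Bad2 :=
          measure_union_le _ _
      _ ≤ (∑ i0 : Fin d, omegaMeasure d p hp1 (Bad1 i0)) + omegaMeasure d p hp1 Bad2 := by
          apply add_le_add_left
          exact (measure_iUnion_le _).trans (le_of_eq (tsum_fintype _))
      _ ≤ (∑ _i0 : Fin d, ENNReal.ofReal (1/(2*(d:ℝ)^2))) + ENNReal.ofReal (1/(2*(d:ℝ))) :=
          add_le_add (Finset.sum_le_sum fun i0 _ => hBad1 i0) hBad2
      _ = (d : ENNReal) * ENNReal.ofReal (1/(2*(d:ℝ)^2)) + ENNReal.ofReal (1/(2*(d:ℝ))) := by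
          rw [Finset.sum_const, Finset.card_univ, Fintype.card_fin, nsmul_eq_mul]
      _ = ENNReal.ofReal (1/(d:ℝ)) := by
          rw [← ENNReal.ofReal_natCast d, ← ENNReal.ofReal_mul (by positivity),
            ← ENNReal.ofReal_add (by positivity) (by positivity), heq]
  have hprob : IsProbabilityMeasure (omegaMeasure d p hp1) := by
    unfold omegaMeasure; infer_instance
  have hGm : MeasurableSet G := S9.measurableSet_all G
  have hcompl : omegaMeasure d p hp1 Gᶜ = 1 - omegaMeasure d p hp1 G :=
    prob_compl_eq_one_sub hGm
  have hofd : ENNReal.ofReal (1/(d:ℝ)) = 1/(d:ENNReal) := by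
    rw [ENNReal.ofReal_div_of_pos hdR, ENNReal.ofReal_one, ENNReal.ofReal_natCast]
  have hle : 1 - omegaMeasure d p hp1 G ≤ 1/(d:ENNReal) := by
    rw [← hcompl, ← hofd]; exact hunion
  have h1 : (1:ENNReal) ≤ 1/(d:ENNReal) + omegaMeasure d p hp1 G :=
    tsub_le_iff_right.mp hle
  exact tsub_le_iff_left.mpr h1
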